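/- Let M be a compact Hausdorff topological space equipped with a partial order ⪯ making it a toposet. Then the set I(M) of continuous isotone functions f : M → ℝ, regarded as self-adjoint elements of the unital C*-algebra C(M,ℂ) of continuous complex-valued functions on M, is an isocone of C(M,ℂ): it is nonempty, stable under composition with continuous non-decreasing functions ℝ → ℝ, stable under sums, closed in the uniform norm, and separates the states of C(M,ℂ). -/

import Mathlib

open scoped ComplexOrder

/-- A state on a unital C*-algebra: a linear functional with `φ 1 = 1` and `φ (a* a) ≥ 0`. -/
def IsState {A : Type*} [CStarAlgebra A] (φ : A →ₗ[ℂ] ℂ) : Prop :=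
  φ 1 = 1 ∧ ∀ a : A, 0 ≤ φ (star a * a)

/-- An isocone of a unital C*-algebra: a nonempty set of self-adjoint elements, stable under
continuous non-decreasing functional calculus, stable under sums, norm-closed, and separating
the states. -/
def IsIsocone {A : Type*} [CStarAlgebra A] (I : Set A) : Prop :=
  I.Nonempty ∧
  (∀ a ∈ I, IsSelfAdjoint a) ∧
  (∀ a ∈ I, ∀ f : ℝ → ℝ, Continuous f → Monotone f → cfc f a ∈ I) ∧
  (∀ a ∈ I, ∀ b ∈ I, a + b ∈ I) ∧
  IsClosed I ∧
  (∀ φ ψ : A →ₗ[ℂ] ℂ, IsState φ → IsState ψ → (∀ a ∈ I, φ a = ψ a) → φ = ψ)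

/-! ### Auxiliary material -/

section Aux

variable {M : Type*} [TopologicalSpace M]

/-- Complexification of a real-valued continuous map. -/
noncomputable def myOfR (f : C(M, ℝ)) : C(M, ℂ) :=
  ⟨fun x ↦ (f x : ℂ), Complex.continuous_ofReal.comp f.continuous⟩

@[simp] lemma myOfR_apply (f : C(M, ℝ)) (x : M) : myOfR f x = (f x : ℂ) := rfl

lemma myOfR_add (f g : C(M, ℝ)) : myOfR (f + g) = myOfR f + myOfR g := by
  ext x; simp

lemma myOfR_sub (f g : C(M, ℝ)) : myOfR (f - g) = myOfR f - myOfR g := by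
  ext x; simp

lemma myOfR_smul (r : ℝ) (f : C(M, ℝ)) : myOfR (r • f) = (r : ℂ) • myOfR f := by
  ext x; simp

lemma myOfR_zero : myOfR (0 : C(M, ℝ)) = 0 := by
  ext x; simp

lemma myOfR_sq (f : C(M, ℝ)) (hf : ∀ x, 0 ≤ f x) :
    ∃ c : C(M, ℂ), star c * c = myOfR f := by
  refine ⟨myOfR ⟨fun x ↦ Real.sqrt (f x), (Real.continuous_sqrt).comp f.continuous⟩, ?_⟩
  ext x
  simp only [ContinuousMap.mul_apply, ContinuousMap.star_apply, myOfR_apply,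
    ContinuousMap.coe_mk, Complex.star_def, Complex.conj_ofReal]
  rw [← Complex.ofReal_mul, Real.mul_self_sqrt (hf x)]

variable [CompactSpace M]

lemma state_pos (φ : C(M, ℂ) →ₗ[ℂ] ℂ) (hφ : IsState φ) (f : C(M, ℝ))
    (hf : ∀ x, 0 ≤ f x) : 0 ≤ φ (myOfR f) := by
  obtain ⟨c, hc⟩ := myOfR_sq f hf
  simpa [hc] using hφ.2 c

lemma state_bound (φ : C(M, ℂ) →ₗ[ℂ] ℂ) (hφ : IsState φ) (f : C(M, ℝ)) :
    ‖φ (myOfR f)‖ ≤ ‖f‖ := by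
  set n : ℝ := ‖f‖ with hn
  have habs : ∀ x, |f x| ≤ n := fun x ↦ by
    simpa using f.norm_coe_le_norm x
  have h₁ : 0 ≤ φ (myOfR (n • 1 - f)) :=
    state_pos φ hφ _ (fun x ↦ by simpa using (abs_le.mp (habs x)).2)
  have h₂ : 0 ≤ φ (myOfR (n • 1 + f)) :=
    state_pos φ hφ _ (fun x ↦ by
      have := (abs_le.mp (habs x)).1; simp only [ContinuousMap.add_apply,
        ContinuousMap.smul_apply, ContinuousMap.one_apply, smul_eq_mul, mul_one]; linarith)
  have e₁ : myOfR (n • 1 - f) = (n : ℂ) • 1 - myOfR f := by ext x; simp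
  have e₂ : myOfR (n • 1 + f) = (n : ℂ) • 1 + myOfR f := by ext x; simp
  rw [e₁] at h₁; rw [e₂] at h₂
  rw [map_sub, map_smul, hφ.1] at h₁
  rw [map_add, map_smul, hφ.1] at h₂
  set z : ℂ := φ (myOfR f) with hz
  rw [Complex.le_def] at h₁ h₂
  simp only [Complex.zero_re, Complex.sub_re, Complex.smul_re, Complex.one_re,
    Complex.zero_im, Complex.sub_im, Complex.smul_im, Complex.one_im,
    Complex.add_re, Complex.add_im, smul_eq_mul, mul_one, mul_zero,
    Complex.ofReal_re, Complex.ofReal_im] at h₁ h₂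
  have him : z.im = 0 := by linarith [h₁.2, h₂.2]
  have : z = (z.re : ℂ) := Complex.ext (by simp) (by simp [him])
  rw [this, Complex.norm_real, Real.norm_eq_abs]
  rw [abs_le]
  constructor <;> [linarith [h₂.1]; linarith [h₁.1]]

end Aux

/-! ### Functional calculus computation -/

lemma cfc_ofReal (g : ℝ → ℝ) (r : ℝ) :
    cfc g ((r : ℝ) : ℂ) = ((g r : ℝ) : ℂ) := by
  have hsa : IsSelfAdjoint ((r : ℝ) : ℂ) := by
    rw [IsSelfAdjoint, Complex.star_def, Complex.conj_ofReal]
  have hspec : spectrum ℝ ((r : ℝ) : ℂ) ⊆ {r} := by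
    intro z hz
    rw [spectrum.mem_iff] at hz
    have : algebraMap ℝ ℂ z - (r : ℂ) = ((z - r : ℝ) : ℂ) := by
      push_cast [Complex.coe_algebraMap]; ring
    rw [this, isUnit_iff_ne_zero, not_not] at hz
    have : (z - r : ℝ) = 0 := by exact_mod_cast hz
    simpa [sub_eq_zero] using this
  calc cfc g ((r : ℝ) : ℂ) = cfc (fun _ : ℝ ↦ g r) ((r : ℝ) : ℂ) := by
        apply cfc_congr
        intro z hz
        have : z = r := hspec hz
        simp [this]
    _ = algebraMap ℝ ℂ (g r) := cfc_const _ _ hsa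
    _ = ((g r : ℝ) : ℂ) := rfl

noncomputable instance cfcRealContMapInst {M : Type*} [TopologicalSpace M] [CompactSpace M] :
    ContinuousFunctionalCalculus ℝ C(M, ℂ) IsSelfAdjoint :=
  IsSelfAdjoint.instContinuousFunctionalCalculus

lemma cfc_myOfR {M : Type*} [TopologicalSpace M] [CompactSpace M]
    (a : C(M, ℂ)) (f : M → ℝ)
    (hval : ∀ x, a x = (f x : ℂ)) (g : ℝ → ℝ) (hg : Continuous g) (x : M) :
    cfc g a x = ((g (f x) : ℝ) : ℂ) := by
  have hsa : IsSelfAdjoint a := by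
    rw [IsSelfAdjoint]
    ext y
    rw [ContinuousMap.star_apply, hval y, Complex.star_def, Complex.conj_ofReal]
  have hax : IsSelfAdjoint (a x) := by
    rw [IsSelfAdjoint, hval x, Complex.star_def, Complex.conj_ofReal]
  have hcpt : CompactSpace (spectrum ℝ a) :=
    isCompact_iff_compactSpace.mp (spectrum.isCompact a)
  have key := StarAlgHom.map_cfc (S := ℂ) (ContinuousMap.evalStarAlgHom ℂ ℂ x) g a
    (hg.continuousOn) (continuous_eval_const x) hsa hax
  have : cfc g a x = cfc g (a x) := key
  rw [this, hval x, cfc_ofReal g]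

/-! ### The monotone functions and Stone–Weierstrass -/

/-- The set of monotone continuous real functions on `M`. -/
abbrev Jset (M : Type*) [TopologicalSpace M] [PartialOrder M] : Set C(M, ℝ) :=
  {u : C(M, ℝ) | Monotone ⇑u}

section SW

variable {M : Type*} [TopologicalSpace M] [CompactSpace M] [PartialOrder M]

lemma key_mul (u v : C(M, ℝ)) (hu : u ∈ Jset M) (hv : v ∈ Jset M) :
    u * v ∈ Submodule.span ℝ (Jset M) := by
  set c : ℝ := ‖u‖
  set d : ℝ := ‖v‖
  have hcu : ∀ x, 0 ≤ u x + c := fun x ↦ by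
    have := (abs_le.mp (by simpa using u.norm_coe_le_norm x)).1; linarith
  have hdv : ∀ x, 0 ≤ v x + d := fun x ↦ by
    have := (abs_le.mp (by simpa using v.norm_coe_le_norm x)).1; linarith
  have hw : (u + c • 1) * (v + d • 1) ∈ Jset M := by
    intro x y hxy
    simp only [ContinuousMap.mul_apply, ContinuousMap.add_apply, ContinuousMap.smul_apply,
      ContinuousMap.one_apply, smul_eq_mul, mul_one]
    exact mul_le_mul (by have := hu hxy; linarith) (by have := hv hxy; linarith)
      (hdv x) (by have := hcu y; linarith)
  have hdecomp : u * v = (u + c • 1) * (v + d • 1) - (d • u + c • v + (c * d) • 1) := by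
    ext x; simp only [ContinuousMap.mul_apply, ContinuousMap.add_apply, ContinuousMap.sub_apply,
      ContinuousMap.smul_apply, ContinuousMap.one_apply, smul_eq_mul, mul_one]
    ring
  rw [hdecomp]
  have h1 : (1 : C(M, ℝ)) ∈ Jset M := fun _ _ _ ↦ le_rfl
  exact Submodule.sub_mem _ (Submodule.subset_span hw)
    (Submodule.add_mem _ (Submodule.add_mem _
      (Submodule.smul_mem _ _ (Submodule.subset_span hu))
      (Submodule.smul_mem _ _ (Submodule.subset_span hv)))
      (Submodule.smul_mem _ _ (Submodule.subset_span h1)))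

lemma span_mul_mem : ∀ (x y : C(M, ℝ)), x ∈ Submodule.span ℝ (Jset M) →
    y ∈ Submodule.span ℝ (Jset M) → x * y ∈ Submodule.span ℝ (Jset M) := by
  intro x y hx hy
  revert y hy
  revert hx
  intro hx
  induction hx using Submodule.span_induction with
  | mem u hu =>
    intro y hy
    induction hy using Submodule.span_induction with
    | mem v hv => exact key_mul u v hu hv
    | zero => simp only [mul_zero]; exact Submodule.zero_mem _
    | add a b _ _ ha hb => rw [mul_add]; exact Submodule.add_mem _ ha hb
    | smul r a _ ha => rw [mul_smul_comm]; exact Submodule.smul_mem _ _ ha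
  | zero => intro y hy; simp only [zero_mul]; exact Submodule.zero_mem _
  | add a b _ _ ha hb => intro y hy; rw [add_mul]; exact Submodule.add_mem _ (ha y hy) (hb y hy)
  | smul r a _ ha => intro y hy; rw [smul_mul_assoc]; exact Submodule.smul_mem _ _ (ha y hy)

/-- The linear span of the monotone continuous functions, as a subalgebra. -/
noncomputable def Ssub (M : Type*) [TopologicalSpace M] [CompactSpace M] [PartialOrder M] :
    Subalgebra ℝ C(M, ℝ) :=
  (Submodule.span ℝ (Jset M)).toSubalgebra
    (Submodule.subset_span (fun _ _ _ ↦ le_rfl)) span_mul_mem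

lemma dense_span [T2Space M]
    (htoposet : ∀ x y : M, x ≤ y ↔
      ∀ f : M → ℝ, Continuous f → Monotone f → f x ≤ f y)
    (f : C(M, ℝ)) :
    f ∈ closure ((Submodule.span ℝ (Jset M) : Submodule ℝ C(M, ℝ)) : Set C(M, ℝ)) := by
  have hsep : (Ssub M).SeparatesPoints := by
    intro x y hxy
    have hkey : ¬ x ≤ y ∨ ¬ y ≤ x := by
      by_contra h; push_neg at h; exact hxy (le_antisymm h.1 h.2)
    have main : ∀ a b : M, ¬ a ≤ b → ∃ g ∈ (fun f : C(M, ℝ) => (f : M → ℝ)) ''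
        ((Ssub M : Set C(M, ℝ))), g a ≠ g b := by
      intro a b hab
      rw [htoposet] at hab
      push_neg at hab
      obtain ⟨g, hgc, hgm, hgab⟩ := hab
      refine ⟨⇑(⟨g, hgc⟩ : C(M, ℝ)), ⟨⟨g, hgc⟩,
        show (⟨g, hgc⟩ : C(M, ℝ)) ∈ (Ssub M : Set C(M, ℝ)) from Submodule.subset_span hgm,
        rfl⟩, ?_⟩
      intro h
      exact absurd (le_of_eq (h : g a = g b)) (not_le.mpr hgab)
    rcases hkey with h | h
    · exact main x y h
    · obtain ⟨g, hg, hgne⟩ := main y x h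
      exact ⟨g, hg, fun hh ↦ hgne hh.symm⟩
  have htop := ContinuousMap.subalgebra_topologicalClosure_eq_top_of_separatesPoints _ hsep
  have hmem : f ∈ (Ssub M).topologicalClosure := htop ▸ trivial
  have hcoe := Subalgebra.topologicalClosure_coe (Ssub M)
  have : f ∈ ((Ssub M).topologicalClosure : Set C(M, ℝ)) := hmem
  rw [hcoe] at this
  exact this

end SW

/-- if `M` is a compact Hausdorff toposet, the continuous real-valued isotone
functions on `M`, regarded as self-adjoint elements of `C(M, ℂ)`, form an isocone. -/
theorem isocone_of_compact_toposet (M : Type*) [TopologicalSpace M] [CompactSpace M]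
    [T2Space M] [PartialOrder M]
    (htoposet : ∀ x y : M, x ≤ y ↔
      ∀ f : M → ℝ, Continuous f → Monotone f → f x ≤ f y) :
    IsIsocone {g : C(M, ℂ) |
      ∃ f : M → ℝ, Continuous f ∧ Monotone f ∧ ∀ x : M, g x = (f x : ℂ)} := by
  set I : Set C(M, ℂ) := {g : C(M, ℂ) |
      ∃ f : M → ℝ, Continuous f ∧ Monotone f ∧ ∀ x : M, g x = (f x : ℂ)} with hI
  refine ⟨?_, ?_, ?_, ?_, ?_, ?_⟩
  · -- nonempty
    exact ⟨0, 0, continuous_const, monotone_const, fun x ↦ by simp⟩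
  · -- self-adjoint
    rintro a ⟨f, hfc, hfm, hval⟩
    rw [IsSelfAdjoint]
    ext y
    rw [ContinuousMap.star_apply, hval y, Complex.star_def, Complex.conj_ofReal]
  · -- cfc stability
    rintro a ⟨f, hfc, hfm, hval⟩ g hgc hgm
    exact ⟨g ∘ f, hgc.comp hfc, hgm.comp hfm, fun x ↦ cfc_myOfR a f hval g hgc x⟩
  · -- sums
    rintro a ⟨f₁, hfc₁, hfm₁, hval₁⟩ b ⟨f₂, hfc₂, hfm₂, hval₂⟩
    refine ⟨f₁ + f₂, hfc₁.add hfc₂, hfm₁.add hfm₂, fun x ↦ ?_⟩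
    simp only [ContinuousMap.add_apply, hval₁ x, hval₂ x, Pi.add_apply]
    push_cast
    ring
  · -- closed
    have hset : I = {g : C(M, ℂ) | ∀ x, (g x).im = 0} ∩
        {g : C(M, ℂ) | ∀ x y : M, x ≤ y → (g x).re ≤ (g y).re} := by
      ext g
      constructor
      · rintro ⟨f, hfc, hfm, hval⟩
        refine ⟨fun x ↦ by rw [hval x]; simp, fun x y hxy ↦ ?_⟩
        rw [hval x, hval y]
        simpa using hfm hxy
      · rintro ⟨h₁, h₂⟩
        refine ⟨fun x ↦ (g x).re, Complex.continuous_re.comp g.continuous,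
          fun x y hxy ↦ h₂ x y hxy, fun x ↦ ?_⟩
        exact (Complex.ext (by simp) (by simp [h₁ x])).symm
    rw [hset]
    have hA : IsClosed {g : C(M, ℂ) | ∀ x, (g x).im = 0} := by
      have : {g : C(M, ℂ) | ∀ x, (g x).im = 0} = ⋂ x, {g : C(M, ℂ) | (g x).im = 0} := by
        ext g; simp
      rw [this]
      exact isClosed_iInter fun x ↦ isClosed_eq
        (Complex.continuous_im.comp (continuous_eval_const x)) continuous_const
    have hB : IsClosed {g : C(M, ℂ) | ∀ x y : M, x ≤ y → (g x).re ≤ (g y).re} := by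
      have : {g : C(M, ℂ) | ∀ x y : M, x ≤ y → (g x).re ≤ (g y).re} =
          ⋂ (x : M) (y : M) (_ : x ≤ y), {g : C(M, ℂ) | (g x).re ≤ (g y).re} := by
        ext g; simp
      rw [this]
      exact isClosed_iInter fun x ↦ isClosed_iInter fun y ↦ isClosed_iInter fun _ ↦
        isClosed_le (Complex.continuous_re.comp (continuous_eval_const x))
          (Complex.continuous_re.comp (continuous_eval_const y))
    exact hA.inter hB
  · -- separates states
    intro φ ψ hφ hψ hag
    have hJ : ∀ u ∈ Jset M, φ (myOfR u) = ψ (myOfR u) := by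
      intro u hu
      exact hag (myOfR u) ⟨⇑u, u.continuous, hu, fun x ↦ rfl⟩
    have hspan : ∀ u ∈ Submodule.span ℝ (Jset M), φ (myOfR u) = ψ (myOfR u) := by
      intro u hu
      induction hu using Submodule.span_induction with
      | mem v hv => exact hJ v hv
      | zero => rw [myOfR_zero, map_zero, map_zero]
      | add a b _ _ ha hb => rw [myOfR_add, map_add, map_add, ha, hb]
      | smul r a _ ha => rw [myOfR_smul, map_smul, map_smul, ha]
    have hall : ∀ u : C(M, ℝ), φ (myOfR u) = ψ (myOfR u) := by
      intro u
      by_contra h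
      have hpos : 0 < ‖φ (myOfR u) - ψ (myOfR u)‖ := by
        rw [norm_pos_iff, sub_ne_zero]; exact h
      have hdense := dense_span htoposet u
      rw [Metric.mem_closure_iff] at hdense
      obtain ⟨g, hg, hdist⟩ := hdense (‖φ (myOfR u) - ψ (myOfR u)‖ / 4) (by linarith)
      have hφψg := hspan g hg
      have hdiff : φ (myOfR u) - ψ (myOfR u) = φ (myOfR (u - g)) - ψ (myOfR (u - g)) := by
        rw [myOfR_sub, map_sub, map_sub, hφψg]; ring
      have hle : ‖φ (myOfR (u - g)) - ψ (myOfR (u - g))‖ ≤ 2 * ‖u - g‖ := by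
        calc ‖φ (myOfR (u - g)) - ψ (myOfR (u - g))‖
            ≤ ‖φ (myOfR (u - g))‖ + ‖ψ (myOfR (u - g))‖ := norm_sub_le _ _
          _ ≤ ‖u - g‖ + ‖u - g‖ := add_le_add (state_bound φ hφ _) (state_bound ψ hψ _)
          _ = 2 * ‖u - g‖ := by ring
      rw [← hdiff] at hle
      have hdg : dist u g = ‖u - g‖ := dist_eq_norm u g
      linarith
    apply LinearMap.ext
    intro a
    set reA : C(M, ℝ) := ⟨fun x ↦ (a x).re, Complex.continuous_re.comp a.continuous⟩
    set imA : C(M, ℝ) := ⟨fun x ↦ (a x).im, Complex.continuous_im.comp a.continuous⟩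
    have hdecomp : a = myOfR reA + Complex.I • myOfR imA := by
      ext x
      simp only [ContinuousMap.add_apply, ContinuousMap.smul_apply, myOfR_apply,
        ContinuousMap.coe_mk, smul_eq_mul, reA, imA]
      rw [mul_comm]
      exact (Complex.re_add_im (a x)).symm
    rw [hdecomp, map_add, map_add, map_smul, map_smul, hall reA, hall imA]
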